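/- Under the hypotheses of the packing-based theorem with the volume lower bound strengthened to μ(X) > a·(β + N) for an integer N > 0 (instead of μ(X) > a·β), any maximal r-separated set in X contains at least β + N + 1 points, and hence one can find at least N + 1 distinct pairs of points (x_i, y_i), each pair satisfying d_X(x_i,y_i) ≥ r and d_Y(x_i,y_i) ≤ δ, with the pairs using pairwise distinct points except possibly one shared point between consecutive pairs. -/

import Mathlib

open MeasureTheory Metric
open scoped ENNReal

private lemma indep_card_le {X Y : Type*} [MetricSpace Y]
    (ι : X → Y) (hinj : Function.Injective ι) (δ : ℝ) (β : ℕ)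
    (hβ : ∀ t : Finset Y, (∀ p ∈ t, ∀ q ∈ t, p ≠ q → δ < dist p q) → t.card ≤ β)
    (B : Finset X)
    (hind : ∀ p ∈ B, ∀ q ∈ B, p ≠ q → δ < dist (ι p) (ι q)) :
    B.card ≤ β := by
  classical
  have h := hβ (B.image ι) ?_
  · rwa [Finset.card_image_of_injective _ hinj] at h
  · intro p hp q hq hpq
    obtain ⟨x, hx, rfl⟩ := Finset.mem_image.mp hp
    obtain ⟨y, hy, rfl⟩ := Finset.mem_image.mp hq
    exact hind x hx y hy fun h => hpq (by rw [h])

private lemma chain_aux {X Y : Type*} [MetricSpace X] [MetricSpace Y] [DecidableEq X]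
    (ι : X → Y) (hinj : Function.Injective ι)
    (r δ : ℝ) (β : ℕ)
    (hβ : ∀ t : Finset Y, (∀ p ∈ t, ∀ q ∈ t, p ≠ q → δ < dist p q) → t.card ≤ β)
    (s : Finset X)
    (hsep : ∀ p ∈ s, ∀ q ∈ s, p ≠ q → r ≤ dist p q) :
    ∀ n : ℕ, ∀ (A I : Finset X) (t : Option X),
      A.card + t.toFinset.card ≤ n →
      A ⊆ s → I ⊆ s → t.toFinset ⊆ s →
      Disjoint A I → Disjoint A t.toFinset → Disjoint I t.toFinset →
      (∀ p ∈ I, ∀ q ∈ I, p ≠ q → δ < dist (ι p) (ι q)) →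
      (∀ p ∈ I, ∀ q ∈ A, δ < dist (ι p) (ι q)) →
      (∀ p ∈ I, ∀ q ∈ t.toFinset, δ < dist (ι p) (ι q)) →
      ∃ l : List (X × X),
        (A.card + I.card + t.toFinset.card ≤ l.length + β) ∧
        (∀ pr ∈ l, r ≤ dist pr.1 pr.2 ∧ dist (ι pr.1) (ι pr.2) ≤ δ) ∧
        (∀ pr ∈ l, pr.1 ∈ A ∪ t.toFinset ∧ pr.2 ∈ A ∪ t.toFinset) ∧
        (∀ tv ∈ t.toFinset, ∀ j (hj : j < l.length), 1 ≤ j →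
           tv ≠ (l.get ⟨j, hj⟩).1 ∧ tv ≠ (l.get ⟨j, hj⟩).2) ∧
        (∀ i j (hi : i < l.length) (hj : j < l.length), i < j →
           (l.get ⟨i, hi⟩).1 ≠ (l.get ⟨j, hj⟩).1 ∧ (l.get ⟨i, hi⟩).1 ≠ (l.get ⟨j, hj⟩).2) ∧
        (∀ i j (hi : i < l.length) (hj : j < l.length), i + 2 ≤ j →
           (l.get ⟨i, hi⟩).2 ≠ (l.get ⟨j, hj⟩).1 ∧ (l.get ⟨i, hi⟩).2 ≠ (l.get ⟨j, hj⟩).2) := by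
  intro n
  induction n with
  | zero =>
    intro A I t hn hAs hIs hts hAI hAt hIt hII hIA hItd
    have hA : A = ∅ := Finset.card_eq_zero.mp (by omega)
    have ht : t.toFinset = ∅ := Finset.card_eq_zero.mp (by omega)
    refine ⟨[], ?_, by simp, by simp, ?_, by simp, by simp⟩
    · simp only [hA, ht, Finset.card_empty, List.length_nil]
      have := indep_card_le ι hinj δ β hβ I hII
      omega
    · intro tv htv j hj
      simp at hj
  | succ n ih =>
    intro A I t hn hAs hIs hts hAI hAt hIt hII hIA hItd
    cases t with
    | some tv =>
      have htv : tv ∈ s := hts (by simp)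
      have htvA : tv ∉ A := Finset.disjoint_right.mp hAt (by simp)
      have htvI : tv ∉ I := Finset.disjoint_right.mp hIt (by simp)
      by_cases hex : ∃ u ∈ A, dist (ι tv) (ι u) ≤ δ
      · obtain ⟨u, huA, hud⟩ := hex
        have hus : u ∈ s := hAs huA
        have hcardA : 0 < A.card := Finset.card_pos.mpr ⟨u, huA⟩
        have hce : (A.erase u).card = A.card - 1 := Finset.card_erase_of_mem huA
        obtain ⟨l, c1, c2, c3, c4, c5, c6⟩ := ih (A.erase u) I (some u)
          (by simp only [Option.toFinset_some, Finset.card_singleton] at hn ⊢; omega)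
          ((Finset.erase_subset _ _).trans hAs) hIs
          (by simp [hus])
          (Finset.disjoint_of_subset_left (Finset.erase_subset _ _) hAI)
          (by simp)
          (by simp [Finset.disjoint_left.mp hAI huA])
          hII
          (fun p hp q hq => hIA p hp q (Finset.erase_subset _ _ hq))
          (by intro p hp q hq; simp only [Option.toFinset_some, Finset.mem_singleton] at hq
              rw [hq]; exact hIA p hp u huA)
        have hmem : ∀ pr ∈ l, pr.1 ∈ A ∧ pr.2 ∈ A := by
          intro pr hpr
          have h3 := c3 pr hpr
          have hsub : (A.erase u) ∪ (some u).toFinset ⊆ A := by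
            simp only [Option.toFinset_some]
            exact Finset.union_subset (Finset.erase_subset _ _) (by simpa using huA)
          exact ⟨hsub h3.1, hsub h3.2⟩
        refine ⟨(tv, u) :: l, ?_, ?_, ?_, ?_, ?_, ?_⟩
        · simp only [Option.toFinset_some, Finset.card_singleton] at c1 ⊢
          simp only [List.length_cons]
          omega
        · intro pr hpr
          rcases List.mem_cons.mp hpr with h | h
          · subst h
            exact ⟨hsep tv htv u hus (fun h => htvA (h ▸ huA)), hud⟩
          · exact c2 pr h
        · intro pr hpr
          rcases List.mem_cons.mp hpr with h | h
          · subst h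
            constructor
            · simp
            · exact Finset.mem_union_left _ huA
          · have := hmem pr h
            exact ⟨Finset.mem_union_left _ this.1, Finset.mem_union_left _ this.2⟩
        · intro tv' htv' j hj h1j
          simp only [Option.toFinset_some, Finset.mem_singleton] at htv'
          rw [htv']
          rcases j with _ | j'
          · omega
          · have hj' : j' < l.length := by simp only [List.length_cons] at hj; omega
            have hm := hmem _ (List.get_mem l ⟨j', hj'⟩)
            have e : ((tv, u) :: l).get ⟨j' + 1, hj⟩ = l.get ⟨j', hj'⟩ := rfl
            rw [e]
            exact ⟨fun h => htvA (by rw [show tv = _ from h]; exact hm.1), fun h => htvA (by rw [show tv = _ from h]; exact hm.2)⟩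
        · intro i j hi hj hij
          rcases j with _ | j'
          · omega
          · have hj' : j' < l.length := by simp only [List.length_cons] at hj; omega
            have ej : ((tv, u) :: l).get ⟨j' + 1, hj⟩ = l.get ⟨j', hj'⟩ := rfl
            rcases i with _ | i'
            · have ei : ((tv, u) :: l).get ⟨0, hi⟩ = (tv, u) := rfl
              rw [ei, ej]
              have hm := hmem _ (List.get_mem l ⟨j', hj'⟩)
              exact ⟨fun h => htvA (by rw [show tv = _ from h]; exact hm.1), fun h => htvA (by rw [show tv = _ from h]; exact hm.2)⟩
            · have hi' : i' < l.length := by simp only [List.length_cons] at hi; omega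
              have eiv : ((tv, u) :: l).get ⟨i' + 1, hi⟩ = l.get ⟨i', hi'⟩ := rfl
              rw [eiv, ej]
              exact c5 i' j' hi' hj' (by omega)
        · intro i j hi hj hij
          rcases j with _ | j'
          · omega
          · have hj' : j' < l.length := by simp only [List.length_cons] at hj; omega
            have ej : ((tv, u) :: l).get ⟨j' + 1, hj⟩ = l.get ⟨j', hj'⟩ := rfl
            rcases i with _ | i'
            · have ei : ((tv, u) :: l).get ⟨0, hi⟩ = (tv, u) := rfl
              rw [ei, ej]
              exact c4 u (by simp) j' hj' (by omega)
            · have hi' : i' < l.length := by simp only [List.length_cons] at hi; omega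
              have eiv : ((tv, u) :: l).get ⟨i' + 1, hi⟩ = l.get ⟨i', hi'⟩ := rfl
              rw [eiv, ej]
              exact c6 i' j' hi' hj' (by omega)
      · push_neg at hex
        have htvnI : tv ∉ I := htvI
        obtain ⟨l, c1, c2, c3, c4, c5, c6⟩ := ih A (insert tv I) none
          (by simp only [Option.toFinset_some, Finset.card_singleton] at hn
              simp only [Option.toFinset_none, Finset.card_empty]; omega)
          hAs (Finset.insert_subset htv hIs) (by simp)
          (Finset.disjoint_insert_right.mpr ⟨htvA, hAI⟩)
          (by simp) (by simp)
          (by intro p hp q hq hpq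
              rcases Finset.mem_insert.mp hp with rfl | hp'
              · rcases Finset.mem_insert.mp hq with rfl | hq'
                · exact absurd rfl hpq
                · rw [dist_comm]; exact hItd q hq' p (by simp)
              · rcases Finset.mem_insert.mp hq with rfl | hq'
                · exact hItd p hp' q (by simp)
                · exact hII p hp' q hq' hpq)
          (by intro p hp q hq
              rcases Finset.mem_insert.mp hp with rfl | hp'
              · exact hex q hq
              · exact hIA p hp' q hq)
          (by simp)
        refine ⟨l, ?_, c2, ?_, ?_, c5, c6⟩
        · simp only [Option.toFinset_none, Finset.card_empty] at c1
          simp only [Option.toFinset_some, Finset.card_singleton]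
          rw [Finset.card_insert_of_notMem htvnI] at c1
          omega
        · intro pr hpr
          have h3 := c3 pr hpr
          simp only [Option.toFinset_none, Finset.union_empty] at h3
          exact ⟨Finset.mem_union_left _ h3.1, Finset.mem_union_left _ h3.2⟩
        · intro tv' htv' j hj h1j
          simp only [Option.toFinset_some, Finset.mem_singleton] at htv'
          rw [htv']
          have h3 := c3 _ (List.get_mem l ⟨j, hj⟩)
          simp only [Option.toFinset_none, Finset.union_empty] at h3
          exact ⟨fun h => htvA (by rw [h]; exact h3.1), fun h => htvA (by rw [h]; exact h3.2)⟩
    | none =>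
      by_cases hex : ∃ u ∈ A, ∃ v ∈ A, u ≠ v ∧ dist (ι u) (ι v) ≤ δ
      · obtain ⟨u, huA, v, hvA, huv, hd⟩ := hex
        have hus : u ∈ s := hAs huA
        have hvs : v ∈ s := hAs hvA
        have hvA' : v ∈ A.erase u := Finset.mem_erase.mpr ⟨huv.symm, hvA⟩
        have hce1 : (A.erase u).card = A.card - 1 := Finset.card_erase_of_mem huA
        have hce2 : ((A.erase u).erase v).card = (A.erase u).card - 1 :=
          Finset.card_erase_of_mem hvA'
        have hcpos : 0 < (A.erase u).card := Finset.card_pos.mpr ⟨v, hvA'⟩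
        obtain ⟨l, c1, c2, c3, c4, c5, c6⟩ := ih ((A.erase u).erase v) I (some v)
          (by simp only [Option.toFinset_none, Finset.card_empty] at hn
              simp only [Option.toFinset_some, Finset.card_singleton]; omega)
          (((Finset.erase_subset _ _).trans (Finset.erase_subset _ _)).trans hAs) hIs
          (by simp [hvs])
          (Finset.disjoint_of_subset_left
            ((Finset.erase_subset _ _).trans (Finset.erase_subset _ _)) hAI)
          (by simp)
          (by simp [Finset.disjoint_left.mp hAI hvA])
          hII
          (fun p hp q hq => hIA p hp q ((Finset.erase_subset _ _).trans (Finset.erase_subset _ _) hq))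
          (by intro p hp q hq; simp only [Option.toFinset_some, Finset.mem_singleton] at hq
              rw [hq]; exact hIA p hp v hvA)
        have hmem : ∀ pr ∈ l, (pr.1 ∈ A ∧ pr.1 ≠ u) ∧ (pr.2 ∈ A ∧ pr.2 ≠ u) := by
          intro pr hpr
          have h3 := c3 pr hpr
          have key : ∀ x, x ∈ ((A.erase u).erase v) ∪ (some v).toFinset → x ∈ A ∧ x ≠ u := by
            intro x hx
            simp only [Option.toFinset_some] at hx
            rcases Finset.mem_union.mp hx with hx' | hx'
            · have := (Finset.erase_subset _ _) hx'
              exact ⟨(Finset.erase_subset _ _) this, Finset.ne_of_mem_erase this⟩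
            · simp only [Finset.mem_singleton] at hx'
              subst hx'
              exact ⟨hvA, huv.symm⟩
          exact ⟨key _ h3.1, key _ h3.2⟩
        refine ⟨(u, v) :: l, ?_, ?_, ?_, ?_, ?_, ?_⟩
        · simp only [Option.toFinset_some, Finset.card_singleton] at c1
          simp only [Option.toFinset_none, Finset.card_empty, List.length_cons]
          omega
        · intro pr hpr
          rcases List.mem_cons.mp hpr with h | h
          · subst h
            exact ⟨hsep u hus v hvs huv, hd⟩
          · exact c2 pr h
        · intro pr hpr
          rcases List.mem_cons.mp hpr with h | h
          · subst h
            exact ⟨Finset.mem_union_left _ huA, Finset.mem_union_left _ hvA⟩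
          · have := hmem pr h
            exact ⟨Finset.mem_union_left _ this.1.1, Finset.mem_union_left _ this.2.1⟩
        · intro tv' htv'
          simp at htv'
        · intro i j hi hj hij
          rcases j with _ | j'
          · omega
          · have hj' : j' < l.length := by simp only [List.length_cons] at hj; omega
            have ej : ((u, v) :: l).get ⟨j' + 1, hj⟩ = l.get ⟨j', hj'⟩ := rfl
            rcases i with _ | i'
            · have ei : ((u, v) :: l).get ⟨0, hi⟩ = (u, v) := rfl
              rw [ei, ej]
              have hm := hmem _ (List.get_mem l ⟨j', hj'⟩)
              exact ⟨fun h => hm.1.2 (show _ = u from h.symm), fun h => hm.2.2 (show _ = u from h.symm)⟩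
            · have hi' : i' < l.length := by simp only [List.length_cons] at hi; omega
              have eiv : ((u, v) :: l).get ⟨i' + 1, hi⟩ = l.get ⟨i', hi'⟩ := rfl
              rw [eiv, ej]
              exact c5 i' j' hi' hj' (by omega)
        · intro i j hi hj hij
          rcases j with _ | j'
          · omega
          · have hj' : j' < l.length := by simp only [List.length_cons] at hj; omega
            have ej : ((u, v) :: l).get ⟨j' + 1, hj⟩ = l.get ⟨j', hj'⟩ := rfl
            rcases i with _ | i'
            · have ei : ((u, v) :: l).get ⟨0, hi⟩ = (u, v) := rfl
              rw [ei, ej]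
              exact c4 v (by simp) j' hj' (by omega)
            · have hi' : i' < l.length := by simp only [List.length_cons] at hi; omega
              have eiv : ((u, v) :: l).get ⟨i' + 1, hi⟩ = l.get ⟨i', hi'⟩ := rfl
              rw [eiv, ej]
              exact c6 i' j' hi' hj' (by omega)
      · push_neg at hex
        refine ⟨[], ?_, by simp, by simp, ?_, by simp, by simp⟩
        · simp only [Option.toFinset_none, Finset.card_empty, List.length_nil]
          have hind : ∀ p ∈ A ∪ I, ∀ q ∈ A ∪ I, p ≠ q → δ < dist (ι p) (ι q) := by
            intro p hp q hq hpq
            rcases Finset.mem_union.mp hp with hp' | hp'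
            · rcases Finset.mem_union.mp hq with hq' | hq'
              · exact hex p hp' q hq' hpq
              · rw [dist_comm]; exact hIA q hq' p hp'
            · rcases Finset.mem_union.mp hq with hq' | hq'
              · exact hIA p hp' q hq'
              · exact hII p hp' q hq' hpq
          have := indep_card_le ι hinj δ β hβ (A ∪ I) hind
          rw [Finset.card_union_of_disjoint hAI] at this
          omega
        · intro tv htv
          simp at htv

/-- Strengthened packing theorem: if μ(X) > a·(β+N) (N > 0 an integer) then any maximal
r-separated set in X has at least β+N+1 points, and one can find N+1 distinct pairs, each
at intrinsic distance ≥ r and extrinsic distance ≤ δ, with non-consecutive pairs using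
pairwise disjoint point sets (consecutive pairs may share one point). -/
theorem stmt18 {X Y : Type*} [MetricSpace X] [MetricSpace Y] [MeasurableSpace X]
    (ι : X → Y) (hinj : Function.Injective ι)
    (hι : ∀ a b : X, dist (ι a) (ι b) ≤ dist a b)
    (μ : Measure X) (r δ : ℝ) (hr : 0 < r) (hδ : 0 < δ) (a : ℝ≥0∞) (β N : ℕ) (hN : 0 < N)
    (hball : ∀ p : X, μ (closedBall p r) ≤ a)
    (hβ : ∀ t : Finset Y, (∀ p ∈ t, ∀ q ∈ t, p ≠ q → δ < dist p q) → t.card ≤ β)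
    (htot : a * (β + N) < μ Set.univ)
    (s : Finset X)
    (hsep : ∀ p ∈ s, ∀ q ∈ s, p ≠ q → r ≤ dist p q)
    (hcover : ∀ z : X, ∃ p ∈ s, dist z p ≤ r) :
    β + N + 1 ≤ s.card ∧
      ∃ pr : Fin (N + 1) → X × X,
        (∀ i, r ≤ dist (pr i).1 (pr i).2 ∧ dist (ι (pr i).1) (ι (pr i).2) ≤ δ) ∧
        (∀ i j : Fin (N + 1), (i : ℕ) + 1 < (j : ℕ) →
          ({(pr i).1, (pr i).2} ∩ {(pr j).1, (pr j).2} : Set X) = ∅) ∧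
        (∀ i j : Fin (N + 1), i ≠ j →
          ({(pr i).1, (pr i).2} : Set X) ≠ {(pr j).1, (pr j).2}) := by
  classical
  have hone : μ Set.univ ≤ (s.card : ℝ≥0∞) * a := by
    calc μ Set.univ ≤ μ (⋃ p ∈ s, closedBall p r) := by
          apply measure_mono
          intro z _
          obtain ⟨p, hp, hd⟩ := hcover z
          exact Set.mem_biUnion hp (mem_closedBall.mpr hd)
      _ ≤ ∑ p ∈ s, μ (closedBall p r) := measure_biUnion_finset_le s _
      _ ≤ ∑ p ∈ s, a := Finset.sum_le_sum fun p _ => hball p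
      _ = s.card * a := by rw [Finset.sum_const, nsmul_eq_mul]
  have hcard : β + N < s.card := by
    by_contra hcon
    push_neg at hcon
    have h1 : (s.card : ℝ≥0∞) * a ≤ a * ((β : ℝ≥0∞) + N) := by
      rw [mul_comm]
      refine mul_le_mul_right ?_ a
      exact_mod_cast hcon
    exact absurd (htot.trans_le (hone.trans h1)) (lt_irrefl _)
  obtain ⟨l, c1, c2, c3, c4, c5, c6⟩ :=
    chain_aux ι hinj r δ β hβ s hsep s.card s ∅ none (by simp) (subset_refl s)
      (by simp) (by simp) (by simp) (by simp) (by simp) (by simp) (by simp) (by simp)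
  have hNl : N + 1 ≤ l.length := by
    simp only [Option.toFinset_none, Finset.card_empty, Finset.card_empty] at c1
    omega
  have hlt : ∀ i : Fin (N + 1), (i : ℕ) < l.length := fun i => lt_of_lt_of_le i.isLt hNl
  refine ⟨by omega, fun i => l.get ⟨i, hlt i⟩, ?_, ?_, ?_⟩
  · intro i
    exact c2 _ (List.get_mem l ⟨i, hlt i⟩)
  · intro i j hij
    obtain ⟨a1, a2⟩ := c5 i j (hlt i) (hlt j) (by omega)
    obtain ⟨b1, b2⟩ := c6 i j (hlt i) (hlt j) (by omega)
    ext x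
    simp only [Set.mem_inter_iff, Set.mem_insert_iff, Set.mem_singleton_iff,
      Set.mem_empty_iff_false, iff_false, not_and, not_or]
    rintro (rfl | rfl)
    · exact ⟨fun h => a1 h, fun h => a2 h⟩
    · exact ⟨fun h => b1 h, fun h => b2 h⟩
  · intro i j hij
    have hne : (i : ℕ) ≠ (j : ℕ) := fun h => hij (Fin.ext h)
    rcases hne.lt_or_gt with h | h
    · obtain ⟨a1, a2⟩ := c5 i j (hlt i) (hlt j) h
      intro heq
      have : (l.get ⟨(i : ℕ), hlt i⟩).1 ∈ ({(l.get ⟨(j : ℕ), hlt j⟩).1,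
          (l.get ⟨(j : ℕ), hlt j⟩).2} : Set X) := by
        rw [← heq]; exact Set.mem_insert _ _
      rcases this with h' | h'
      · exact a1 h'
      · exact a2 h'
    · obtain ⟨a1, a2⟩ := c5 j i (hlt j) (hlt i) h
      intro heq
      have : (l.get ⟨(j : ℕ), hlt j⟩).1 ∈ ({(l.get ⟨(i : ℕ), hlt i⟩).1,
          (l.get ⟨(i : ℕ), hlt i⟩).2} : Set X) := by
        rw [heq]; exact Set.mem_insert _ _
      rcases this with h' | h'
      · exact a1 h'
      · exact a2 h'
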